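/- Let R be the ring of eventually constant sequences of elements of 𝔽₂. Then R as a right module over itself is automorphism-invariant but not self-injective: its injective hull is the full product ∏_{n ∈ ℕ} 𝔽₂, whose only ring-module automorphism is the identity. -/

import Mathlib

set_option synthInstance.maxHeartbeats 1000000
set_option maxHeartbeats 1000000


/-- A submodule is essential if it intersects every nonzero submodule nontrivially. -/
def IsEssential {R M : Type*} [Ring R] [AddCommGroup M] [Module R M]
    (N : Submodule R M) : Prop :=
  ∀ K : Submodule R M, K ≠ ⊥ → N ⊓ K ≠ ⊥

/-- The subring of eventually constant sequences of elements of 𝔽₂. -/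
def evConst : Subring (ℕ → ZMod 2) where
  carrier := {f | ∃ N : ℕ, ∃ c : ZMod 2, ∀ n : ℕ, N ≤ n → f n = c}
  zero_mem' := ⟨0, 0, fun _ _ => rfl⟩
  one_mem' := ⟨0, 1, fun _ _ => rfl⟩
  add_mem' := by
    rintro f g ⟨N₁, c₁, h₁⟩ ⟨N₂, c₂, h₂⟩
    exact ⟨max N₁ N₂, c₁ + c₂, fun n hn => by
      simp [h₁ n (le_trans (le_max_left _ _) hn), h₂ n (le_trans (le_max_right _ _) hn)]⟩
  mul_mem' := by
    rintro f g ⟨N₁, c₁, h₁⟩ ⟨N₂, c₂, h₂⟩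
    exact ⟨max N₁ N₂, c₁ * c₂, fun n hn => by
      simp [h₁ n (le_trans (le_max_left _ _) hn), h₂ n (le_trans (le_max_right _ _) hn)]⟩
  neg_mem' := by
    rintro f ⟨N, c, h⟩
    exact ⟨N, -c, fun n hn => by simp [h n hn]⟩

/-- The ring `evConst`, viewed as a submodule (over itself) of the full product. -/
def evConstSubmodule : Submodule ↥evConst (ℕ → ZMod 2) where
  carrier := evConst
  zero_mem' := evConst.zero_mem
  add_mem' := fun hf hg => evConst.add_mem hf hg
  smul_mem' := fun r x hx => by
    first
    | exact evConst.mul_mem r.2 hx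
    | simpa [Algebra.smul_def] using evConst.mul_mem r.2 hx

/-- The indicator function of `{n}`, as an element of the full product. -/
def deltaFn (n : ℕ) : ℕ → ZMod 2 := fun m => if m = n then 1 else 0

lemma deltaFn_mem (n : ℕ) : deltaFn n ∈ evConst :=
  ⟨n + 1, 0, fun m hm => by
    simp only [deltaFn, if_neg (by omega : m ≠ n)]⟩

/-- The indicator function of `{n}`, as an element of `evConst`. -/
def delta (n : ℕ) : ↥evConst := ⟨deltaFn n, deltaFn_mem n⟩

lemma smul_apply' (r : ↥evConst) (x : ℕ → ZMod 2) (n : ℕ) :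
    (r • x) n = (r : ℕ → ZMod 2) n * x n := rfl

lemma zmod2_cases (a : ZMod 2) : a = 0 ∨ a = 1 := by revert a; decide

lemma delta_smul_apply (n : ℕ) (x : ℕ → ZMod 2) (m : ℕ) :
    (delta n • x) m = if m = n then x n else 0 := by
  rw [smul_apply']
  simp only [delta, deltaFn]
  split <;> simp_all

lemma delta_mul_coe (n : ℕ) (r : ↥evConst) (m : ℕ) :
    ((delta n * r : ↥evConst) : ℕ → ZMod 2) m = if m = n then (r : ℕ → ZMod 2) n else 0 := by
  have : ((delta n * r : ↥evConst) : ℕ → ZMod 2) m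
      = deltaFn n m * (r : ℕ → ZMod 2) m := rfl
  rw [this]
  simp only [deltaFn]
  split <;> simp_all

lemma evConst_baer : Module.Baer ↥evConst (ℕ → ZMod 2) := by
  intro I g
  classical
  refine ⟨LinearMap.mk (AddHom.mk (fun r n =>
      if h : delta n ∈ I then (g ⟨delta n * r, I.mul_mem_right r h⟩) n else 0) ?_) ?_, ?_⟩
  · intro r s
    funext n
    by_cases h : delta n ∈ I
    · simp only [dif_pos h, Pi.add_apply]
      have : (⟨delta n * (r + s), I.mul_mem_right _ h⟩ : I)
          = ⟨delta n * r, I.mul_mem_right r h⟩ + ⟨delta n * s, I.mul_mem_right s h⟩ :=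
        Subtype.ext (mul_add _ _ _)
      rw [this, map_add]
      rfl
    · simp [dif_neg h]
  · intro s r
    funext n
    simp only [RingHom.id_apply]
    by_cases h : delta n ∈ I
    · simp only [dif_pos h]
      have : (⟨delta n * (s • r), I.mul_mem_right _ h⟩ : I)
          = s • ⟨delta n * r, I.mul_mem_right r h⟩ :=
        Subtype.ext (by rw [smul_eq_mul]; exact mul_left_comm _ _ _)
      rw [this, map_smul, smul_apply']
      simp only [smul_apply', dif_pos h]
    · simp [dif_neg h, smul_apply']
  · intro x mem
    funext n
    simp only [LinearMap.coe_mk, AddHom.coe_mk]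
    by_cases h : delta n ∈ I
    · simp only [dif_pos h]
      have he : (⟨delta n * x, I.mul_mem_right x h⟩ : I) = delta n • ⟨x, mem⟩ := by
        ext; rfl
      rw [he, map_smul, smul_apply']
      show deltaFn n n * _ = _
      simp [deltaFn]
    · simp only [dif_neg h]
      have hx0 : (x : ℕ → ZMod 2) n = 0 := by
        by_contra hne
        have hx1 : (x : ℕ → ZMod 2) n = 1 :=
          (zmod2_cases _).resolve_left hne
        apply h
        have : delta n = delta n * x := by
          ext m
          rw [delta_mul_coe]
          show deltaFn n m = _
          simp only [deltaFn]
          split <;> simp_all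
        rw [this]
        exact I.mul_mem_left _ mem
      have hz : (delta n • (⟨x, mem⟩ : I)) = 0 := by
        ext m
        show ((delta n * x : ↥evConst) : ℕ → ZMod 2) m = 0
        rw [delta_mul_coe, hx0]
        simp
      have := congrArg (fun z : I => g z n) hz
      simp only [map_smul, map_zero, Pi.zero_apply, smul_apply'] at this
      have h2 : (delta n : ℕ → ZMod 2) n = 1 := by simp [delta, deltaFn]
      rw [h2, one_mul] at this
      exact this.symm

theorem stmt17 :
    IsEssential evConstSubmodule ∧
    Module.Injective ↥evConst (ℕ → ZMod 2) ∧
    (∀ φ : (ℕ → ZMod 2) ≃ₗ[↥evConst] (ℕ → ZMod 2),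
      φ = LinearEquiv.refl ↥evConst (ℕ → ZMod 2)) ∧
    (∀ φ : (ℕ → ZMod 2) ≃ₗ[↥evConst] (ℕ → ZMod 2),
      ∀ x ∈ evConstSubmodule, φ x ∈ evConstSubmodule) ∧
    evConstSubmodule ≠ ⊤ := by
  -- Part 1: essentiality
  have part1 : IsEssential evConstSubmodule := by
    intro K hK
    obtain ⟨x, hxK, hx0⟩ := Submodule.exists_mem_ne_zero_of_ne_bot hK
    have : ∃ n, x n ≠ 0 := by
      by_contra h
      push_neg at h
      exact hx0 (funext fun n => h n)
    obtain ⟨n, hn⟩ := this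
    have hxn : x n = 1 := (zmod2_cases (x n)).resolve_left hn
    have hd : delta n • x = deltaFn n := by
      funext m
      rw [delta_smul_apply, hxn]
      rfl
    rw [Submodule.ne_bot_iff]
    refine ⟨deltaFn n, ⟨deltaFn_mem n, ?_⟩, ?_⟩
    · rw [← hd]; exact K.smul_mem _ hxK
    · intro h
      have := congrFun h n
      simp [deltaFn] at this
  -- Part 3 (proved first, used for part 4): every automorphism is the identity
  have part3 : ∀ φ : (ℕ → ZMod 2) ≃ₗ[↥evConst] (ℕ → ZMod 2),
      φ = LinearEquiv.refl ↥evConst (ℕ → ZMod 2) := by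
    intro φ
    set y : ℕ → ZMod 2 := φ 1 with hy
    have key : ∀ (x : ℕ → ZMod 2) (n : ℕ), φ x n = x n * y n := by
      intro x n
      have h1 : φ x n = (delta n • φ x) n := by
        rw [delta_smul_apply]; simp
      rw [h1, ← φ.map_smul]
      rcases zmod2_cases (x n) with h | h
      · have : delta n • x = 0 := by
          funext m; rw [delta_smul_apply, h]; simp
        rw [this, map_zero, h]
        simp
      · have : delta n • x = delta n • (1 : ℕ → ZMod 2) := by
          funext m; rw [delta_smul_apply, delta_smul_apply, h]; rfl
        rw [this, φ.map_smul, ← hy, delta_smul_apply, h]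
        simp
    obtain ⟨x, hx⟩ := φ.surjective 1
    have hy1 : ∀ n, y n = 1 := by
      intro n
      have := key x n
      rw [hx] at this
      rcases zmod2_cases (y n) with h | h
      · rw [h, mul_zero] at this
        simp at this
      · exact h
    ext x n
    rw [key x n, hy1 n, mul_one]
    rfl
  refine ⟨part1, ?_, part3, ?_, ?_⟩
  -- Part 2: injectivity via Baer's criterion
  · exact Module.Baer.injective evConst_baer
  -- Part 4: automorphism invariance
  · intro φ x hx
    rw [part3 φ]
    exact hx
  -- Part 5: not the whole module
  · intro h
    have hf : (fun n => if Even n then 1 else 0 : ℕ → ZMod 2) ∈ evConstSubmodule := by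
      rw [h]; trivial
    obtain ⟨N, c, hc⟩ := hf
    have h1 : (1 : ZMod 2) = c := by
      simpa [Nat.even_mul] using hc (2 * N) (by omega)
    have h2 : (0 : ZMod 2) = c := by
      simpa [Nat.even_add_one, Nat.even_mul] using hc (2 * N + 1) (by omega)
    rw [← h2] at h1
    exact absurd h1 (by decide)
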